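/- arXiv:math/9905147 — 2 statements merged into one kernel-verified Lean document; each statement's English description precedes it below -/
import Mathlib

section
/- Let J ⊆ Γ and let Q_h̄^J = {(n, π, h) ∈ Q_h̄ : dom(h) ⊆ ∪_{ξ∈J} D_ξ}. Suppose E ⊆ Q_h̄^J is predense in Q_h̄^J, i.e., every element of Q_h̄^J has a common extension in Q_h̄^J with some element of E. Then for every k ≥ 1 and every p ∈ Q_h̄^J the set B_p^k = ∪ { (q̂)^k : q ∈ Q_h̄, q ≤ p, and q ≤ q₀ for some q₀ ∈ E } is dense in (p̂)^k, where (p̂)^k ⊆ (2^ω × 2^ω)^k carries the product topology. -/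
/-- Restriction of `x ∈ 2^ω` to its first `n` coordinates. -/
def res (n : ℕ) (x : ℕ → Bool) : Fin n → Bool := fun i => x i

/-- The basic clopen cylinder `[η] = {x ∈ 2^ω : x↾n = η}` determined by `η ∈ 2^n`. -/
def cyl {n : ℕ} (η : Fin n → Bool) : Set (ℕ → Bool) := {x | res n x = η}

/-- A condition `p = (n, π, h)` of the forcing poset `Q_h̄`, where the family
`h̄ = ⟨h_ξ : ξ ∈ Γ⟩` is given by the domains `Dom ξ ⊆ 2^ω` and (total extensions of)
the functions `hbar ξ`.  The finite partial function `h` is represented by its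
graph, a finite set of pairs. -/
structure QCond {Γ : Type*} (Dom : Γ → Set (ℕ → Bool))
    (hbar : Γ → (ℕ → Bool) → (ℕ → Bool)) where
  /-- the natural number `n` -/
  n : ℕ
  /-- the permutation `π` of `2^n` -/
  perm : Equiv.Perm (Fin n → Bool)
  /-- the graph of the finite partial function `h` -/
  graph : Set ((ℕ → Bool) × (ℕ → Bool))
  /-- `h` is a finite partial function -/
  graph_finite : graph.Finite
  /-- `h` is a function (single-valued) -/
  graph_fun : ∀ z ∈ graph, ∀ w ∈ graph, z.1 = w.1 → z = w
  /-- the domain of `h` is contained in `∪_ξ D_ξ` -/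
  dom_sub : ∀ z ∈ graph, ∃ ξ, z.1 ∈ Dom ξ
  /-- `|dom h ∩ D_ξ| ≤ 1` for every `ξ` -/
  dom_once : ∀ ξ, ∀ z ∈ graph, ∀ w ∈ graph, z.1 ∈ Dom ξ → w.1 ∈ Dom ξ → z = w
  /-- if `x ∈ dom h ∩ D_ξ` then `h x = h_ξ x` -/
  val_eq : ∀ z ∈ graph, ∀ ξ, z.1 ∈ Dom ξ → z.2 = hbar ξ z.1
  /-- if `x ∈ dom h` then `(h x)↾n = π (x↾n)` -/
  proj : ∀ z ∈ graph, res n z.2 = perm (res n z.1)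

/-- The order on `Q_h̄`: `q ≤ p` iff `p.n ≤ q.n`, the partial function of `q`
extends that of `p`, and the permutation of `q` projects onto that of `p`. -/
def QLe {Γ : Type*} {Dom : Γ → Set (ℕ → Bool)} {hbar : Γ → (ℕ → Bool) → (ℕ → Bool)}
    (q p : QCond Dom hbar) : Prop :=
  ∃ hn : p.n ≤ q.n, p.graph ⊆ q.graph ∧
    ∀ η : Fin q.n → Bool,
      (fun i : Fin p.n => q.perm η (Fin.castLE hn i)) =
        p.perm (fun i : Fin p.n => η (Fin.castLE hn i))

/-- `p̂ = ∪_{η ∈ 2^n} [η] × [π η] ⊆ 2^ω × 2^ω`. -/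
def Qhat {Γ : Type*} {Dom : Γ → Set (ℕ → Bool)} {hbar : Γ → (ℕ → Bool) → (ℕ → Bool)}
    (p : QCond Dom hbar) : Set ((ℕ → Bool) × (ℕ → Bool)) :=
  ⋃ η : Fin p.n → Bool, cyl η ×ˢ cyl (p.perm η)

/-! ### Auxiliary lemmas -/

lemma extend_tuples {T : Type*} [Fintype T] {ι : Type*}
    (t s : ι → T) (ht : Function.Injective t) (hs : Function.Injective s) :
    ∃ π : Equiv.Perm T, ∀ i, π (t i) = s i := by
  classical
  let e : {x : T // x ∈ Set.range t} ≃ {x : T // x ∈ Set.range s} :=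
    (Equiv.ofInjective t ht).symm.trans (Equiv.ofInjective s hs)
  refine ⟨e.extendSubtype, fun i => ?_⟩
  rw [e.extendSubtype_apply_of_mem (t i) ⟨i, rfl⟩]
  show ((Equiv.ofInjective s hs) ((Equiv.ofInjective t ht).symm ⟨t i, ⟨i, rfl⟩⟩) : T) = s i
  have : (Equiv.ofInjective t ht).symm ⟨t i, ⟨i, rfl⟩⟩ = i := by
    apply ht
    have := (Equiv.ofInjective t ht).apply_symm_apply ⟨t i, ⟨i, rfl⟩⟩
    simpa [Equiv.ofInjective] using congrArg Subtype.val this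
  rw [this]
  rfl

/-- Restriction from `2^N` to `2^n`. -/
def resLE {n N : ℕ} (h : n ≤ N) (η : Fin N → Bool) : Fin n → Bool :=
  fun i => η (Fin.castLE h i)

def splitE {n N : ℕ} (hn : n ≤ N) : (Fin N → Bool) ≃ (Fin n → Bool) × (Fin (N - n) → Bool) where
  toFun η := (resLE hn η, fun i => η ⟨n + i, by have := i.isLt; omega⟩)
  invFun x := fun j => if hj : (j : ℕ) < n then x.1 ⟨j, hj⟩
    else x.2 ⟨(j : ℕ) - n, by have := j.isLt; omega⟩
  left_inv η := by
    funext j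
    by_cases hj : (j : ℕ) < n
    · simp only [dif_pos hj]
      exact congrArg η (Fin.ext rfl)
    · simp only [dif_neg hj]
      refine congrArg η (Fin.ext ?_)
      show n + ((j : ℕ) - n) = (j : ℕ)
      omega
  right_inv x := by
    refine Prod.ext ?_ ?_
    · funext i
      show dite _ _ _ = x.1 i
      have hi : ((Fin.castLE hn i : Fin N) : ℕ) < n := i.isLt
      rw [dif_pos hi]
      exact congrArg x.1 (Fin.ext rfl)
    · funext i
      show dite _ _ _ = x.2 i
      have hi : ¬ ((n + (i : ℕ)) < n) := by omega
      rw [dif_neg hi]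
      refine congrArg x.2 (Fin.ext ?_)
      show n + (i : ℕ) - n = (i : ℕ)
      omega

lemma splitE_fst {n N : ℕ} (hn : n ≤ N) (η : Fin N → Bool) :
    (splitE hn η).1 = resLE hn η := rfl

lemma fiber_perm {n N : ℕ} (hn : n ≤ N) (σ : Equiv.Perm (Fin n → Bool))
    {ι : Type*} [Fintype ι] (a c : ι → (Fin N → Bool))
    (ha : Function.Injective a) (hc : Function.Injective c)
    (hpr : ∀ i, resLE hn (c i) = σ (resLE hn (a i))) :
    ∃ π : Equiv.Perm (Fin N → Bool),
      (∀ η, resLE hn (π η) = σ (resLE hn η)) ∧ ∀ i, π (a i) = c i := by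
  classical
  set sp := splitE hn with hsp
  have key : ∀ b : Fin n → Bool, ∃ ρ : Equiv.Perm (Fin (N - n) → Bool),
      ∀ i : {i : ι // (sp (a i)).1 = b}, ρ (sp (a i.1)).2 = (sp (c i.1)).2 := by
    intro b
    have ht : Function.Injective (fun i : {i : ι // (sp (a i)).1 = b} => (sp (a i.1)).2) := by
      intro i i' h
      apply Subtype.ext; apply ha; apply sp.injective
      exact Prod.ext (i.2.trans i'.2.symm) h
    have hs : Function.Injective (fun i : {i : ι // (sp (a i)).1 = b} => (sp (c i.1)).2) := by
      intro i i' h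
      apply Subtype.ext; apply hc; apply sp.injective
      refine Prod.ext ?_ h
      show resLE hn (c i.1) = resLE hn (c i'.1)
      rw [hpr, hpr]
      show σ (sp (a i.1)).1 = σ (sp (a i'.1)).1
      rw [i.2, i'.2]
    obtain ⟨ρ, hρ⟩ := extend_tuples _ _ ht hs
    exact ⟨ρ, hρ⟩
  choose ρ hρ using key
  refine ⟨sp.trans ((Equiv.prodShear σ ρ).trans sp.symm), fun η => ?_, fun i => ?_⟩
  · show resLE hn (sp.symm (Equiv.prodShear σ ρ (sp η))) = _
    rw [← splitE_fst hn]
    show (sp (sp.symm _)).1 = _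
    rw [sp.apply_symm_apply]
    rfl
  · show sp.symm (Equiv.prodShear σ ρ (sp (a i))) = c i
    have h1 : Equiv.prodShear σ ρ (sp (a i)) = sp (c i) := by
      have h2 := hρ (sp (a i)).1 ⟨i, rfl⟩
      refine Prod.ext ?_ ?_
      · show σ (sp (a i)).1 = (sp (c i)).1
        rw [splitE_fst, splitE_fst, hpr]
      · exact h2
    rw [h1, sp.symm_apply_apply]

lemma exists_sep (S : Set (ℕ → Bool)) (hS : S.Finite) :
    ∃ M : ℕ, ∀ N, M ≤ N → ∀ x ∈ S, ∀ y ∈ S, res N x = res N y → x = y := by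
  classical
  set F := hS.toFinset with hF
  set d : (ℕ → Bool) → (ℕ → Bool) → ℕ := fun x y =>
    if h : x = y then 0 else Nat.find (by
      by_contra hc
      push_neg at hc
      exact h (funext fun j => by simpa using hc j) : ∃ j, x j ≠ y j) + 1 with hd
  refine ⟨F.sup (fun x => F.sup (d x)), fun N hN x hx y hy hres => ?_⟩
  by_contra hne
  have hex : ∃ j, x j ≠ y j := by
    by_contra hc
    push_neg at hc
    exact hne (funext fun j => by simpa using hc j)
  have hdxy : d x y = Nat.find hex + 1 := by
    rw [hd]; simp only [dif_neg hne]
  have hle : d x y ≤ N := by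
    calc d x y ≤ F.sup (d x) := Finset.le_sup (by simpa [hF] using hy)
    _ ≤ F.sup (fun x => F.sup (d x)) :=
        Finset.le_sup (f := fun x => F.sup (d x)) (by simpa [hF] using hx)
    _ ≤ N := hN
  have hj : Nat.find hex < N := by omega
  exact Nat.find_spec hex (congrFun hres ⟨Nat.find hex, hj⟩)

lemma exists_tags (k g s : ℕ) (hs : k + g ≤ s) (F : Finset (Fin s → Bool))
    (hF : F.card ≤ g) :
    ∃ τ : Fin k → (Fin s → Bool), Function.Injective τ ∧ ∀ i, τ i ∉ F := by
  classical
  have hcard : Fintype.card (Fin k) ≤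
      Fintype.card ((Finset.univ \ F : Finset (Fin s → Bool)) : Type) := by
    rw [Fintype.card_fin, Fintype.card_coe]
    have h1 : (Finset.univ \ F).card = 2 ^ s - F.card := by
      rw [Finset.card_sdiff_of_subset (Finset.subset_univ F)]
      simp [Finset.card_univ]
    have h2 : s < 2 ^ s := Nat.lt_two_pow_self (n := s)
    omega
  obtain ⟨e⟩ := Function.Embedding.nonempty_of_card_le hcard
  refine ⟨fun i => (e i).1, fun i i' h => ?_, fun i => ?_⟩
  · exact e.injective (Subtype.ext h)
  · have := (e i).2
    rw [Finset.mem_sdiff] at this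
    exact this.2

lemma QLe_trans {Γ : Type*} {Dom : Γ → Set (ℕ → Bool)} {hbar : Γ → (ℕ → Bool) → (ℕ → Bool)}
    {q r p : QCond Dom hbar} (h1 : QLe q r) (h2 : QLe r p) : QLe q p := by
  obtain ⟨hn1, hg1, hp1⟩ := h1
  obtain ⟨hn2, hg2, hp2⟩ := h2
  refine ⟨hn2.trans hn1, hg2.trans hg1, fun η => ?_⟩
  funext i
  have h3 := congrFun (hp1 η) (Fin.castLE hn2 i)
  have h4 := congrFun (hp2 (fun t : Fin r.n => η (Fin.castLE hn1 t))) i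
  calc q.perm η (Fin.castLE (hn2.trans hn1) i)
      = q.perm η (Fin.castLE hn1 (Fin.castLE hn2 i)) := by
        exact congrArg (q.perm η) (Fin.ext rfl)
    _ = r.perm (fun t => η (Fin.castLE hn1 t)) (Fin.castLE hn2 i) := h3
    _ = p.perm (fun t : Fin p.n => η (Fin.castLE hn1 (Fin.castLE hn2 t))) i := h4
    _ = p.perm (fun t : Fin p.n => η (Fin.castLE (hn2.trans hn1) t)) i := by
        refine congrFun (congrArg p.perm (funext fun t => ?_)) i
        exact congrArg η (Fin.ext rfl)

theorem stmt_16 {Γ : Type*}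
    (Dom : Γ → Set (ℕ → Bool)) (hbar : Γ → (ℕ → Bool) → (ℕ → Bool))
    (hcount : ∀ ξ, (Dom ξ).Countable)
    (hdisjD : Pairwise fun ξ η => Disjoint (Dom ξ) (Dom η))
    (hdisjR : Pairwise fun ξ η => Disjoint (hbar ξ '' Dom ξ) (hbar η '' Dom η))
    (J : Set Γ) (E : Set (QCond Dom hbar))
    -- `E ⊆ Q_h̄^J`, where `q ∈ Q_h̄^J` iff `dom h^q ⊆ ∪_{ξ ∈ J} D_ξ`
    (hE : ∀ e ∈ E, ∀ z ∈ e.graph, ∃ ξ ∈ J, z.1 ∈ Dom ξ)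
    -- `E` is predense in `Q_h̄^J`: every element of `Q_h̄^J` has a common
    -- extension in `Q_h̄^J` with some element of `E`
    (hpre : ∀ p : QCond Dom hbar, (∀ z ∈ p.graph, ∃ ξ ∈ J, z.1 ∈ Dom ξ) →
      ∃ q : QCond Dom hbar, (∀ z ∈ q.graph, ∃ ξ ∈ J, z.1 ∈ Dom ξ) ∧
        QLe q p ∧ ∃ e ∈ E, QLe q e)
    (k : ℕ) (hk : 1 ≤ k)
    (p : QCond Dom hbar) (hp : ∀ z ∈ p.graph, ∃ ξ ∈ J, z.1 ∈ Dom ξ) :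
    -- `B_p^k` is dense in `(p̂)^k ⊆ (2^ω × 2^ω)^k` (product topology):
    -- every point of `(p̂)^k` lies in the closure of `B_p^k`
    {z : Fin k → (ℕ → Bool) × (ℕ → Bool) | ∀ i, z i ∈ Qhat p} ⊆
      closure {z : Fin k → (ℕ → Bool) × (ℕ → Bool) |
        ∃ q : QCond Dom hbar, QLe q p ∧ (∃ e ∈ E, QLe q e) ∧ ∀ i, z i ∈ Qhat q} := by
  classical
  intro z hz
  have hz2 : ∀ i, res p.n (z i).2 = p.perm (res p.n (z i).1) := by
    intro i
    obtain ⟨η, h1, h2⟩ := Set.mem_iUnion.mp (hz i)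
    have e1 : res p.n (z i).1 = η := h1
    have e2 : res p.n (z i).2 = p.perm η := h2
    rw [e1, e2]
  have snd_inj : ∀ w ∈ p.graph, ∀ w' ∈ p.graph, w.2 = w'.2 → w = w' := by
    intro w hw w' hw' h2
    obtain ⟨ξ, hξ⟩ := p.dom_sub w hw
    obtain ⟨ξ', hξ'⟩ := p.dom_sub w' hw'
    rcases eq_or_ne ξ ξ' with rfl | hne
    · exact p.dom_once ξ w hw w' hw' hξ hξ'
    · exfalso
      have hm1 : w.2 ∈ hbar ξ '' Dom ξ := ⟨w.1, hξ, (p.val_eq w hw ξ hξ).symm⟩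
      have hm2 : w'.2 ∈ hbar ξ' '' Dom ξ' := ⟨w'.1, hξ', (p.val_eq w' hw' ξ' hξ').symm⟩
      exact Set.disjoint_left.mp (hdisjR hne) hm1 (h2 ▸ hm2)
  -- the key finite approximation
  have key : ∀ m : ℕ, ∃ w : Fin k → (ℕ → Bool) × (ℕ → Bool),
      (∃ q : QCond Dom hbar, QLe q p ∧ (∃ e ∈ E, QLe q e) ∧ ∀ i, w i ∈ Qhat q) ∧
      ∀ i, ∀ j : ℕ, j < m → (w i).1 j = (z i).1 j ∧ (w i).2 j = (z i).2 j := by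
    intro m
    set GF := p.graph_finite.toFinset with hGF
    obtain ⟨M, hM⟩ := exists_sep (Prod.fst '' p.graph ∪ Prod.snd '' p.graph)
      ((p.graph_finite.image _).union (p.graph_finite.image _))
    set m' := max (max m p.n) M with hm'
    set s := k + 2 * GF.card with hs
    set Fb : Finset (Fin s → Bool) :=
      GF.image (fun w => fun t : Fin s => w.1 (m' + (t : ℕ))) ∪
      GF.image (fun w => fun t : Fin s => w.2 (m' + (t : ℕ))) with hFb
    have hFbcard : Fb.card ≤ 2 * GF.card := by
      refine le_trans (Finset.card_union_le _ _) ?_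
      have := Finset.card_image_le (s := GF) (f := fun w => fun t : Fin s => w.1 (m' + (t : ℕ)))
      have := Finset.card_image_le (s := GF) (f := fun w => fun t : Fin s => w.2 (m' + (t : ℕ)))
      omega
    obtain ⟨τ, hτinj, hτF⟩ := exists_tags k (2 * GF.card) s (by omega) Fb hFbcard
    have hpn : p.n ≤ m' + s := by omega
    have hmm' : m ≤ m' := by omega
    have hMm' : M ≤ m' := by omega
    have hpm' : p.n ≤ m' := by omega
    -- the constraint tuples
    set A : (Fin k ⊕ {w // w ∈ GF}) → (Fin (m' + s) → Bool) :=
      Sum.elim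
        (fun i => fun j => if hj : (j : ℕ) < m' then (z i).1 j
          else τ i ⟨(j : ℕ) - m', by have := j.isLt; omega⟩)
        (fun w => res (m' + s) w.1.1) with hA
    set C : (Fin k ⊕ {w // w ∈ GF}) → (Fin (m' + s) → Bool) :=
      Sum.elim
        (fun i => fun j => if hj : (j : ℕ) < m' then (z i).2 j
          else τ i ⟨(j : ℕ) - m', by have := j.isLt; omega⟩)
        (fun w => res (m' + s) w.1.2) with hC
    have memg : ∀ w : {w // w ∈ GF}, w.1 ∈ p.graph := fun w =>
      (Set.Finite.mem_toFinset _).mp w.2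
    -- tag extraction
    have tagA : ∀ (i : Fin k) (t : Fin s),
        A (Sum.inl i) ⟨m' + (t : ℕ), by have := t.isLt; omega⟩ = τ i t := by
      intro i t
      simp only [hA, Sum.elim_inl]
      rw [dif_neg (by omega : ¬ (m' + (t : ℕ) < m'))]
      refine congrArg (τ i) (Fin.ext ?_)
      show m' + (t : ℕ) - m' = (t : ℕ)
      omega
    have tagC : ∀ (i : Fin k) (t : Fin s),
        C (Sum.inl i) ⟨m' + (t : ℕ), by have := t.isLt; omega⟩ = τ i t := by
      intro i t
      simp only [hC, Sum.elim_inl]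
      rw [dif_neg (by omega : ¬ (m' + (t : ℕ) < m'))]
      refine congrArg (τ i) (Fin.ext ?_)
      show m' + (t : ℕ) - m' = (t : ℕ)
      omega
    have hAinj : Function.Injective A := by
      rintro (i | w) (i' | w') h
      · have : τ i = τ i' := by
          funext t
          rw [← tagA i t, ← tagA i' t, h]
        rw [hτinj this]
      · exfalso
        apply hτF i
        have : τ i = fun t : Fin s => w'.1.1 (m' + (t : ℕ)) := by
          funext t
          rw [← tagA i t, h]
          rfl
        rw [this]
        exact Finset.mem_union_left _ (Finset.mem_image_of_mem _ w'.2)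
      · exfalso
        apply hτF i'
        have : τ i' = fun t : Fin s => w.1.1 (m' + (t : ℕ)) := by
          funext t
          rw [← tagA i' t, ← h]
          rfl
        rw [this]
        exact Finset.mem_union_left _ (Finset.mem_image_of_mem _ w.2)
      · have h1 : w.1.1 = w'.1.1 := by
          refine hM (m' + s) (by omega) _ (Or.inl ⟨w.1, memg w, rfl⟩)
            _ (Or.inl ⟨w'.1, memg w', rfl⟩) ?_
          exact h
        have := p.graph_fun w.1 (memg w) w'.1 (memg w') h1
        exact congrArg Sum.inr (Subtype.ext this)
    have hCinj : Function.Injective C := by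
      rintro (i | w) (i' | w') h
      · have : τ i = τ i' := by
          funext t
          rw [← tagC i t, ← tagC i' t, h]
        rw [hτinj this]
      · exfalso
        apply hτF i
        have : τ i = fun t : Fin s => w'.1.2 (m' + (t : ℕ)) := by
          funext t
          rw [← tagC i t, h]
          rfl
        rw [this]
        exact Finset.mem_union_right _ (Finset.mem_image_of_mem _ w'.2)
      · exfalso
        apply hτF i'
        have : τ i' = fun t : Fin s => w.1.2 (m' + (t : ℕ)) := by
          funext t
          rw [← tagC i' t, ← h]
          rfl
        rw [this]
        exact Finset.mem_union_right _ (Finset.mem_image_of_mem _ w.2)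
      · have h1 : w.1.2 = w'.1.2 := by
          refine hM (m' + s) (by omega) _ (Or.inr ⟨w.1, memg w, rfl⟩)
            _ (Or.inr ⟨w'.1, memg w', rfl⟩) ?_
          exact h
        have := snd_inj w.1 (memg w) w'.1 (memg w') h1
        exact congrArg Sum.inr (Subtype.ext this)
    have hresA : ∀ i : Fin k, resLE hpn (A (Sum.inl i)) = res p.n (z i).1 := by
      intro i
      funext j
      show A (Sum.inl i) (Fin.castLE hpn j) = (z i).1 (j : ℕ)
      simp only [hA, Sum.elim_inl]
      rw [dif_pos (show ((Fin.castLE hpn j : Fin (m' + s)) : ℕ) < m' from lt_of_lt_of_le j.isLt hpm')]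
      rfl
    have hresC : ∀ i : Fin k, resLE hpn (C (Sum.inl i)) = res p.n (z i).2 := by
      intro i
      funext j
      show C (Sum.inl i) (Fin.castLE hpn j) = (z i).2 (j : ℕ)
      simp only [hC, Sum.elim_inl]
      rw [dif_pos (show ((Fin.castLE hpn j : Fin (m' + s)) : ℕ) < m' from lt_of_lt_of_le j.isLt hpm')]
      rfl
    have hpr : ∀ x, resLE hpn (C x) = p.perm (resLE hpn (A x)) := by
      rintro (i | w)
      · rw [hresA, hresC]
        exact hz2 i
      · show resLE hpn (res (m' + s) w.1.2) = p.perm (resLE hpn (res (m' + s) w.1.1))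
        have e1 : resLE hpn (res (m' + s) w.1.2) = res p.n w.1.2 := rfl
        have e2 : resLE hpn (res (m' + s) w.1.1) = res p.n w.1.1 := rfl
        rw [e1, e2]
        exact p.proj w.1 (memg w)
    obtain ⟨π', hπpr, hπc⟩ := fiber_perm hpn p.perm A C hAinj hCinj hpr
    set q' : QCond Dom hbar :=
      { n := m' + s
        perm := π'
        graph := p.graph
        graph_finite := p.graph_finite
        graph_fun := p.graph_fun
        dom_sub := p.dom_sub
        dom_once := p.dom_once
        val_eq := p.val_eq
        proj := fun w hw =>
          (hπc (Sum.inr ⟨w, (Set.Finite.mem_toFinset _).mpr hw⟩)).symm } with hq'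
    have hq'p : QLe q' p := ⟨hpn, subset_rfl, fun η => hπpr η⟩
    obtain ⟨q, hqJ, hqq', e, he, hqe⟩ := hpre q' hp
    have hNq : m' + s ≤ q.n := hqq'.1
    set wfst : Fin k → ℕ → Bool := fun i j =>
      if hj : j < m' + s then A (Sum.inl i) ⟨j, hj⟩ else false with hwfst
    set ηq : Fin k → (Fin q.n → Bool) := fun i => res q.n (wfst i) with hηq
    set wsnd : Fin k → ℕ → Bool := fun i j =>
      if hj : j < q.n then q.perm (ηq i) ⟨j, hj⟩ else false with hwsnd
    refine ⟨fun i => (wfst i, wsnd i), ⟨q, QLe_trans hqq' hq'p, ⟨e, he, hqe⟩, fun i => ?_⟩,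
      fun i j hj => ⟨?_, ?_⟩⟩
    · refine Set.mem_iUnion.mpr ⟨ηq i, rfl, ?_⟩
      show res q.n (wsnd i) = q.perm (ηq i)
      funext j
      show wsnd i (j : ℕ) = q.perm (ηq i) j
      simp only [hwsnd]
      rw [dif_pos j.isLt]
    · -- first coordinate agreement
      show wfst i j = (z i).1 j
      have hj1 : j < m' + s := by omega
      simp only [hwfst]
      rw [dif_pos hj1]
      simp only [hA, Sum.elim_inl]
      rw [dif_pos (show ((⟨j, hj1⟩ : Fin (m' + s)) : ℕ) < m' by simpa using by omega : _)]
    · -- second coordinate agreement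
      show wsnd i j = (z i).2 j
      have hjq : j < q.n := by omega
      have hjN : j < m' + s := by omega
      simp only [hwsnd]
      rw [dif_pos hjq]
      obtain ⟨hnq, hgr, hproj⟩ := hqq'
      have harg : (fun t : Fin (m' + s) => ηq i (Fin.castLE hnq t)) = A (Sum.inl i) := by
        funext t
        show wfst i ((Fin.castLE hnq t : Fin q.n) : ℕ) = A (Sum.inl i) t
        simp only [hwfst]
        rw [dif_pos (show ((Fin.castLE hnq t : Fin q.n) : ℕ) < m' + s from t.isLt)]
        exact congrArg (A (Sum.inl i)) (Fin.ext rfl)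
      have h5 := congrFun (hproj (ηq i)) (⟨j, hjN⟩ : Fin (m' + s))
      have h6 : q.perm (ηq i) (Fin.castLE hnq ⟨j, hjN⟩) = q'.perm (fun t : Fin (m' + s) => ηq i (Fin.castLE hnq t)) ⟨j, hjN⟩ := h5
      rw [harg] at h6
      have h7 : q'.perm (A (Sum.inl i)) = C (Sum.inl i) := hπc (Sum.inl i)
      rw [h7] at h6
      have h8 : q.perm (ηq i) ⟨j, hjq⟩ = C (Sum.inl i) ⟨j, hjN⟩ := by
        rw [← h6]
        exact congrArg (q.perm (ηq i)) (Fin.ext rfl)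
      rw [h8]
      simp only [hC, Sum.elim_inl]
      rw [dif_pos (show ((⟨j, hjN⟩ : Fin (m' + s)) : ℕ) < m' by simpa using by omega : _)]
  -- conclusion via sequences
  choose W hWmem hWagree using key
  refine mem_closure_of_tendsto (f := W) (b := Filter.atTop) ?_
    (Filter.Eventually.of_forall hWmem)
  rw [tendsto_pi_nhds]
  intro i
  show Filter.Tendsto (fun m => W m i) Filter.atTop (nhds (z i))
  have hsplit : Filter.Tendsto (fun m => ((W m i).1, (W m i).2)) Filter.atTop
      (nhds ((z i).1, (z i).2)) := by
    refine Filter.Tendsto.prodMk_nhds ?_ ?_ <;> rw [tendsto_pi_nhds] <;> intro j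
    · refine Filter.Tendsto.congr' ?_ tendsto_const_nhds
      filter_upwards [Filter.eventually_ge_atTop (j + 1)] with m hm
      exact ((hWagree m i j (by omega)).1).symm
    · refine Filter.Tendsto.congr' ?_ tendsto_const_nhds
      filter_upwards [Filter.eventually_ge_atTop (j + 1)] with m hm
      exact ((hWagree m i j (by omega)).2).symm
  exact hsplit
end

section
/- Let q = (n₀, π₀, g) ∈ Q_h̄, let ξ_0, …, ξ_{m-1} ∈ Γ be distinct indices such that D_{ξ_t} ∩ dom(g) = ∅ for every t < m, and let x_t ∈ D_{ξ_t} be such that (x_t, h_{ξ_t}(x_t)) ∈ q̂ for every t < m. Then p = (n₀, π₀, g ∪ {(x_t, h_{ξ_t}(x_t)) : t < m}) belongs to Q_h̄ and p ≤ q. -/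
theorem stmt_17 {Γ : Type*}
    (Dom : Γ → Set (ℕ → Bool)) (hbar : Γ → (ℕ → Bool) → (ℕ → Bool))
    (hcount : ∀ ξ, (Dom ξ).Countable)
    (hdisjD : Pairwise fun ξ η => Disjoint (Dom ξ) (Dom η))
    (hdisjR : Pairwise fun ξ η => Disjoint (hbar ξ '' Dom ξ) (hbar η '' Dom η))
    (q : QCond Dom hbar) (m : ℕ)
    (ξ : Fin m → Γ) (hξ : Function.Injective ξ)
    -- `D_{ξ_t} ∩ dom g = ∅` for every `t < m`
    (hdom : ∀ t : Fin m, ∀ z ∈ q.graph, z.1 ∉ Dom (ξ t))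
    (x : Fin m → (ℕ → Bool)) (hx : ∀ t : Fin m, x t ∈ Dom (ξ t))
    -- `(x_t, h_{ξ_t}(x_t)) ∈ q̂` for every `t < m`
    (hhat : ∀ t : Fin m, (x t, hbar (ξ t) (x t)) ∈ Qhat q) :
    -- `p = (n₀, π₀, g ∪ {(x_t, h_{ξ_t}(x_t)) : t < m})` belongs to `Q_h̄` and `p ≤ q`
    ∃ p : QCond Dom hbar,
      p.n = q.n ∧ HEq p.perm q.perm ∧
      p.graph = q.graph ∪ Set.range (fun t : Fin m => (x t, hbar (ξ t) (x t))) ∧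
      QLe p q := by
  -- key consequence of pairwise disjointness of domains
  have keyD : ∀ (ξ₀ ξ₁ : Γ) (y : ℕ → Bool), y ∈ Dom ξ₀ → y ∈ Dom ξ₁ → ξ₀ = ξ₁ := by
    intro ξ₀ ξ₁ y h0 h1
    by_contra hne
    exact Set.disjoint_left.mp (hdisjD hne) h0 h1
  have keyhat : ∀ t : Fin m,
      res q.n (hbar (ξ t) (x t)) = q.perm (res q.n (x t)) := by
    intro t
    obtain ⟨η, hη⟩ := Set.mem_iUnion.mp (hhat t)
    obtain ⟨h1, h2⟩ := hη
    simp only [cyl, Set.mem_setOf_eq] at h1 h2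
    rw [h2, h1]
  refine ⟨{
    n := q.n
    perm := q.perm
    graph := q.graph ∪ Set.range (fun t : Fin m => (x t, hbar (ξ t) (x t)))
    graph_finite := q.graph_finite.union (Set.finite_range _)
    graph_fun := by
      rintro z (hz | ⟨t, rfl⟩) w (hw | ⟨s, rfl⟩) he
      · exact q.graph_fun z hz w hw he
      · exact absurd (he ▸ hx s) (hdom s z hz)
      · exact absurd (he ▸ hx t) (hdom t w hw)
      · have he' : x t = x s := he
        have : t = s := hξ (keyD _ _ (x t) (hx t) (he' ▸ hx s))
        subst this; rfl
    dom_sub := by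
      rintro z (hz | ⟨t, rfl⟩)
      · exact q.dom_sub z hz
      · exact ⟨ξ t, hx t⟩
    dom_once := by
      rintro ξ₀ z (hz | ⟨t, rfl⟩) w (hw | ⟨s, rfl⟩) h0 h1
      · exact q.dom_once ξ₀ z hz w hw h0 h1
      · have := keyD _ _ (x s) (hx s) h1
        exact absurd (this ▸ h0) (hdom s z hz)
      · have := keyD _ _ (x t) (hx t) h0
        exact absurd (this ▸ h1) (hdom t w hw)
      · have h2 : ξ t = ξ₀ := keyD _ _ (x t) (hx t) h0
        have h3 : ξ s = ξ₀ := keyD _ _ (x s) (hx s) h1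
        have : t = s := hξ (h2.trans h3.symm)
        subst this; rfl
    val_eq := by
      rintro z (hz | ⟨t, rfl⟩) ξ₀ h0
      · exact q.val_eq z hz ξ₀ h0
      · have : ξ t = ξ₀ := keyD _ _ (x t) (hx t) h0
        rw [← this]
    proj := by
      rintro z (hz | ⟨t, rfl⟩)
      · exact q.proj z hz
      · exact keyhat t
  }, rfl, HEq.rfl, rfl, ?_⟩
  refine ⟨le_rfl, Set.subset_union_left, ?_⟩
  intro η
  rfl
end
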